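/- Let B = ⊕_{g∈G} B_g be a homogeneously non-degenerate G-graded algebra with B_g·B_{g⁻¹}·B_g = B_g for all g, admitting for each g multipliers u_g, v_g of the linking algebra C_g with u_gv_g = e₁₁ and v_gu_g = e₂₂. Then for any g, h ∈ G the composition w_{g,h} = u_g u_h v_{gh} (of the extended maps) defines an invertible multiplier of D_g·D_{gh}, with inverse w_{g,h}⁻¹ = u_{gh} v_h v_g. -/
import Mathlib


/-- The additive subgroup generated by products of elements of `S` and `T`. -/
def setMul {B : Type} [NonUnitalRing B] (S T : AddSubgroup B) : AddSubgroup B :=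
  AddSubgroup.closure (Set.image2 (· * ·) (S : Set B) (T : Set B))

namespace TwistingAux

variable {B : Type} [NonUnitalRing B]

theorem mul_mem_setMul {S T : AddSubgroup B} {a b : B} (ha : a ∈ S) (hb : b ∈ T) :
    a * b ∈ setMul S T :=
  AddSubgroup.subset_closure (Set.mem_image2_of_mem ha hb)

theorem setMul_induction {S T : AddSubgroup B} {p : B → Prop} {x : B}
    (hx : x ∈ setMul S T)
    (mem : ∀ a ∈ S, ∀ b ∈ T, p (a * b))
    (zero : p 0)
    (add : ∀ a b, a ∈ setMul S T → b ∈ setMul S T → p a → p b → p (a + b))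
    (neg : ∀ a, a ∈ setMul S T → p a → p (-a)) : p x := by
  refine AddSubgroup.closure_induction ?_ zero ?_ ?_ hx
  · rintro x ⟨a, ha, b, hb, rfl⟩
    exact mem a ha b hb
  · exact fun a b ha hb pa pb => add a b ha hb pa pb
  · exact fun a ha pa => neg a ha pa

theorem map_zero_of_add (A : AddSubgroup B) (f : B → B)
    (hadd : ∀ x ∈ A, ∀ y ∈ A, f (x + y) = f x + f y) : f 0 = 0 := by
  have h := hadd 0 A.zero_mem 0 A.zero_mem
  rw [add_zero] at h
  exact (left_eq_add.mp h)

theorem map_neg_of_add (A : AddSubgroup B) (f : B → B)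
    (hadd : ∀ x ∈ A, ∀ y ∈ A, f (x + y) = f x + f y) {x : B} (hx : x ∈ A) :
    f (-x) = - f x := by
  have h := hadd x hx (-x) (A.neg_mem hx)
  rw [add_neg_cancel, map_zero_of_add A f hadd] at h
  exact (eq_neg_of_add_eq_zero_right h.symm)

/-- The conjunction of facts tracked along a three-map chain. -/
def PChain (f1 f2 f3 : B → B) (A1 A2 : AddSubgroup B) (U2 U4 U5 : AddSubgroup B)
    (x : B) : Prop :=
  x ∈ A1 ∧ f1 x ∈ U2 ∧ f1 x ∈ A2 ∧ f2 (f1 x) ∈ U4 ∧ f3 (f2 (f1 x)) ∈ U5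

theorem PChain_zero (f1 f2 f3 : B → B) (A1 A2 A3 : AddSubgroup B)
    (U2 U4 U5 : AddSubgroup B)
    (hf1 : ∀ x ∈ A1, ∀ y ∈ A1, f1 (x + y) = f1 x + f1 y)
    (hf2 : ∀ x ∈ A2, ∀ y ∈ A2, f2 (x + y) = f2 x + f2 y)
    (hf3 : ∀ x ∈ A3, ∀ y ∈ A3, f3 (x + y) = f3 x + f3 y) :
    PChain f1 f2 f3 A1 A2 U2 U4 U5 0 := by
  have e1 : f1 0 = 0 := map_zero_of_add A1 f1 hf1
  have e2 : f2 (f1 0) = 0 := by rw [e1]; exact map_zero_of_add A2 f2 hf2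
  have e3 : f3 (f2 (f1 0)) = 0 := by rw [e2]; exact map_zero_of_add A3 f3 hf3
  exact ⟨zero_mem _, by rw [e1]; exact zero_mem _, by rw [e1]; exact zero_mem _,
    by rw [e2]; exact zero_mem _, by rw [e3]; exact zero_mem _⟩

theorem PChain_add (f1 f2 f3 : B → B) (A1 A2 A3 : AddSubgroup B)
    (U2 U4 U5 : AddSubgroup B)
    (hf1 : ∀ x ∈ A1, ∀ y ∈ A1, f1 (x + y) = f1 x + f1 y)
    (hf2 : ∀ x ∈ A2, ∀ y ∈ A2, f2 (x + y) = f2 x + f2 y)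
    (hf3 : ∀ x ∈ A3, ∀ y ∈ A3, f3 (x + y) = f3 x + f3 y)
    (hU4A3 : ∀ {x : B}, x ∈ U4 → x ∈ A3) :
    ∀ x y, PChain f1 f2 f3 A1 A2 U2 U4 U5 x → PChain f1 f2 f3 A1 A2 U2 U4 U5 y →
      PChain f1 f2 f3 A1 A2 U2 U4 U5 (x + y) := by
  rintro x y ⟨hx1, hx2, hx3, hx4, hx5⟩ ⟨hy1, hy2, hy3, hy4, hy5⟩
  have e1 : f1 (x + y) = f1 x + f1 y := hf1 x hx1 y hy1
  have e2 : f2 (f1 (x + y)) = f2 (f1 x) + f2 (f1 y) := by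
    rw [e1]; exact hf2 _ hx3 _ hy3
  have e3 : f3 (f2 (f1 (x + y))) = f3 (f2 (f1 x)) + f3 (f2 (f1 y)) := by
    rw [e2]; exact hf3 _ (hU4A3 hx4) _ (hU4A3 hy4)
  exact ⟨add_mem hx1 hy1, by rw [e1]; exact add_mem hx2 hy2,
    by rw [e1]; exact add_mem hx3 hy3, by rw [e2]; exact add_mem hx4 hy4,
    by rw [e3]; exact add_mem hx5 hy5⟩

theorem PChain_neg (f1 f2 f3 : B → B) (A1 A2 A3 : AddSubgroup B)
    (U2 U4 U5 : AddSubgroup B)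
    (hf1 : ∀ x ∈ A1, ∀ y ∈ A1, f1 (x + y) = f1 x + f1 y)
    (hf2 : ∀ x ∈ A2, ∀ y ∈ A2, f2 (x + y) = f2 x + f2 y)
    (hf3 : ∀ x ∈ A3, ∀ y ∈ A3, f3 (x + y) = f3 x + f3 y)
    (hU4A3 : ∀ {x : B}, x ∈ U4 → x ∈ A3) :
    ∀ x, PChain f1 f2 f3 A1 A2 U2 U4 U5 x → PChain f1 f2 f3 A1 A2 U2 U4 U5 (-x) := by
  rintro x ⟨hx1, hx2, hx3, hx4, hx5⟩
  have e1 : f1 (-x) = - f1 x := map_neg_of_add A1 f1 hf1 hx1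
  have e2 : f2 (f1 (-x)) = - f2 (f1 x) := by
    rw [e1]; exact map_neg_of_add A2 f2 hf2 hx3
  have e3 : f3 (f2 (f1 (-x))) = - f3 (f2 (f1 x)) := by
    rw [e2]; exact map_neg_of_add A3 f3 hf3 (hU4A3 hx4)
  exact ⟨neg_mem hx1, by rw [e1]; exact neg_mem hx2, by rw [e1]; exact neg_mem hx3,
    by rw [e2]; exact neg_mem hx4, by rw [e3]; exact neg_mem hx5⟩

end TwistingAux

open TwistingAux

variable {G : Type} [Group G] {B : Type} [NonUnitalRing B]
/-- Membership in the linking algebra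
`C_g = [[B_g B_{g⁻¹}, B_g], [B_{g⁻¹}, B_{g⁻¹} B_g]]`, realized inside the
`2 × 2` matrices over `B`. -/
def CgMem (Bc : G → AddSubgroup B) (g : G) (x : Matrix (Fin 2) (Fin 2) B) : Prop :=
  x 0 0 ∈ setMul (Bc g) (Bc g⁻¹) ∧ x 0 1 ∈ Bc g ∧
  x 1 0 ∈ Bc g⁻¹ ∧ x 1 1 ∈ setMul (Bc g⁻¹) (Bc g)

/-- A multiplier `(L, Rm)` of the linking algebra `C_g`. -/
structure LinkMult (Bc : G → AddSubgroup B) (g : G) where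
  L : Matrix (Fin 2) (Fin 2) B → Matrix (Fin 2) (Fin 2) B
  Rm : Matrix (Fin 2) (Fin 2) B → Matrix (Fin 2) (Fin 2) B
  L_mem : ∀ x, CgMem Bc g x → CgMem Bc g (L x)
  R_mem : ∀ x, CgMem Bc g x → CgMem Bc g (Rm x)
  L_add : ∀ x y, CgMem Bc g x → CgMem Bc g y → L (x + y) = L x + L y
  R_add : ∀ x y, CgMem Bc g x → CgMem Bc g y → Rm (x + y) = Rm x + Rm y
  L_mul : ∀ x y, CgMem Bc g x → CgMem Bc g y → L (x * y) = L x * y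
  R_mul : ∀ x y, CgMem Bc g x → CgMem Bc g y → Rm (x * y) = x * Rm y
  compat : ∀ x y, CgMem Bc g x → CgMem Bc g y → Rm x * y = x * L y

/-- Left action of the corner multiplier `e₁₁` on `C_g`. -/
def me11L (x : Matrix (Fin 2) (Fin 2) B) : Matrix (Fin 2) (Fin 2) B :=
  !![x 0 0, x 0 1; 0, 0]

/-- Right action of the corner multiplier `e₁₁` on `C_g`. -/
def me11R (x : Matrix (Fin 2) (Fin 2) B) : Matrix (Fin 2) (Fin 2) B :=
  !![x 0 0, 0; x 1 0, 0]

/-- Left action of the corner multiplier `e₂₂` on `C_g`. -/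
def me22L (x : Matrix (Fin 2) (Fin 2) B) : Matrix (Fin 2) (Fin 2) B :=
  !![0, 0; x 1 0, x 1 1]

/-- Right action of the corner multiplier `e₂₂` on `C_g`. -/
def me22R (x : Matrix (Fin 2) (Fin 2) B) : Matrix (Fin 2) (Fin 2) B :=
  !![0, x 0 1; 0, x 1 1]

/-- `u_g v_g = e₁₁` and `v_g u_g = e₂₂` in the multiplier algebra of `C_g`
(recall `L_{uv} = L_u ∘ L_v` and `R_{uv} = R_v ∘ R_u`). -/
def CornerUVg (Bc : G → AddSubgroup B) (g : G) (u v : LinkMult Bc g) : Prop :=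
  (∀ x, CgMem Bc g x → u.L (v.L x) = me11L x) ∧
  (∀ x, CgMem Bc g x → v.Rm (u.Rm x) = me11R x) ∧
  (∀ x, CgMem Bc g x → v.L (u.L x) = me22L x) ∧
  (∀ x, CgMem Bc g x → u.Rm (v.Rm x) = me22R x)

/-- STATEMENT 17, Proposition 5.5: let `B = ⊕_g B_g` be homogeneously
non-degenerate with `B_g B_{g⁻¹} B_g = B_g`, and let `u_g, v_g` be multipliers
of `C_g` with `u_g v_g = e₁₁`, `v_g u_g = e₂₂`, with extensions (Lemma 5.1)
`Lu g : B_{g⁻¹}B → B_gB`, `Lv g` its inverse (right `B`-module isomorphisms)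
and `Ru g : BB_{g⁻¹} → BB_g`, `Rv g` its inverse (left `B`-module
isomorphisms), restricting to `B_{g⁻¹} ↔ D_g` and `D_{g⁻¹} ↔ B_g` and
satisfying the multiplier compatibility `(x u_g)y = x(u_g y)`.
Then `w_{g,h} = u_g u_h v_{gh}` is an invertible multiplier of `D_g·D_{gh}`
with inverse `w_{g,h}⁻¹ = u_{gh} v_h v_g`. -/
theorem twisting_is_multiplier {G : Type} [Group G] [DecidableEq G]
    {B : Type} [NonUnitalRing B]
    (Bc : G → AddSubgroup B)
    (hdir : DirectSum.IsInternal Bc)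
    (hgrmul : ∀ (g h : G) (x y : B), x ∈ Bc g → y ∈ Bc h → x * y ∈ Bc (g * h))
    (hnd : ∀ (g : G) (x : B), x ∈ Bc g → x ≠ 0 →
      (∃ y ∈ Bc g⁻¹, x * y ≠ 0) ∧ (∃ y ∈ Bc g⁻¹, y * x ≠ 0))
    (hpr : ∀ g : G, setMul (setMul (Bc g) (Bc g⁻¹)) (Bc g) = Bc g)
    (Lu Lv Ru Rv : G → B → B)
    -- the extended maps from Lemma 5.1 attached to the multipliers `u_g, v_g`:
    (hLu_mem : ∀ g, ∀ x ∈ setMul (Bc g⁻¹) ⊤, Lu g x ∈ setMul (Bc g) ⊤)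
    (hLv_mem : ∀ g, ∀ x ∈ setMul (Bc g) ⊤, Lv g x ∈ setMul (Bc g⁻¹) ⊤)
    (hRu_mem : ∀ g, ∀ x ∈ setMul ⊤ (Bc g⁻¹), Ru g x ∈ setMul ⊤ (Bc g))
    (hRv_mem : ∀ g, ∀ x ∈ setMul ⊤ (Bc g), Rv g x ∈ setMul ⊤ (Bc g⁻¹))
    (hLu_add : ∀ g x y, x ∈ setMul (Bc g⁻¹) ⊤ → y ∈ setMul (Bc g⁻¹) ⊤ →
      Lu g (x + y) = Lu g x + Lu g y)
    (hLv_add : ∀ g x y, x ∈ setMul (Bc g) ⊤ → y ∈ setMul (Bc g) ⊤ →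
      Lv g (x + y) = Lv g x + Lv g y)
    (hRu_add : ∀ g x y, x ∈ setMul ⊤ (Bc g⁻¹) → y ∈ setMul ⊤ (Bc g⁻¹) →
      Ru g (x + y) = Ru g x + Ru g y)
    (hRv_add : ∀ g x y, x ∈ setMul ⊤ (Bc g) → y ∈ setMul ⊤ (Bc g) →
      Rv g (x + y) = Rv g x + Rv g y)
    (hLu_lin : ∀ g x b, x ∈ setMul (Bc g⁻¹) ⊤ → Lu g (x * b) = Lu g x * b)
    (hLv_lin : ∀ g x b, x ∈ setMul (Bc g) ⊤ → Lv g (x * b) = Lv g x * b)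
    (hRu_lin : ∀ g x b, x ∈ setMul ⊤ (Bc g⁻¹) → Ru g (b * x) = b * Ru g x)
    (hRv_lin : ∀ g x b, x ∈ setMul ⊤ (Bc g) → Rv g (b * x) = b * Rv g x)
    (hLuLv : ∀ g, ∀ x ∈ setMul (Bc g⁻¹) ⊤, Lv g (Lu g x) = x)
    (hLvLu : ∀ g, ∀ x ∈ setMul (Bc g) ⊤, Lu g (Lv g x) = x)
    (hRuRv : ∀ g, ∀ x ∈ setMul ⊤ (Bc g⁻¹), Rv g (Ru g x) = x)
    (hRvRu : ∀ g, ∀ x ∈ setMul ⊤ (Bc g), Ru g (Rv g x) = x)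
    (hLu_piece₁ : ∀ g, ∀ x ∈ Bc g⁻¹, Lu g x ∈ setMul (Bc g) (Bc g⁻¹))
    (hLu_piece₂ : ∀ g, ∀ x ∈ setMul (Bc g⁻¹) (Bc g), Lu g x ∈ Bc g)
    (hLv_piece₁ : ∀ g, ∀ x ∈ Bc g, Lv g x ∈ setMul (Bc g⁻¹) (Bc g))
    (hLv_piece₂ : ∀ g, ∀ x ∈ setMul (Bc g) (Bc g⁻¹), Lv g x ∈ Bc g⁻¹)
    (hRu_piece₁ : ∀ g, ∀ x ∈ setMul (Bc g) (Bc g⁻¹), Ru g x ∈ Bc g)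
    (hRu_piece₂ : ∀ g, ∀ x ∈ Bc g⁻¹, Ru g x ∈ setMul (Bc g⁻¹) (Bc g))
    (hRv_piece₁ : ∀ g, ∀ x ∈ Bc g, Rv g x ∈ setMul (Bc g) (Bc g⁻¹))
    (hRv_piece₂ : ∀ g, ∀ x ∈ setMul (Bc g⁻¹) (Bc g), Rv g x ∈ Bc g⁻¹)
    (u v : ∀ g : G, LinkMult Bc g)
    (huv : ∀ g : G, CornerUVg Bc g (u g) (v g))
    -- the extended maps restrict to the actions of the multipliers `u_g, v_g`:
    (hLu_u : ∀ g, ∀ x ∈ Bc g⁻¹, Lu g x = ((u g).L !![0, 0; x, 0]) 0 0)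
    (hLu_u' : ∀ g, ∀ x ∈ setMul (Bc g⁻¹) (Bc g), Lu g x = ((u g).L !![0, 0; 0, x]) 0 1)
    (hLv_v : ∀ g, ∀ x ∈ Bc g, Lv g x = ((v g).L !![0, x; 0, 0]) 1 1)
    (hLv_v' : ∀ g, ∀ x ∈ setMul (Bc g) (Bc g⁻¹), Lv g x = ((v g).L !![x, 0; 0, 0]) 1 0)
    (hRu_u : ∀ g, ∀ x ∈ setMul (Bc g) (Bc g⁻¹), Ru g x = ((u g).Rm !![x, 0; 0, 0]) 0 1)
    (hRu_u' : ∀ g, ∀ x ∈ Bc g⁻¹, Ru g x = ((u g).Rm !![0, 0; x, 0]) 1 1)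
    (hRv_v : ∀ g, ∀ x ∈ Bc g, Rv g x = ((v g).Rm !![0, x; 0, 0]) 0 0)
    (hRv_v' : ∀ g, ∀ x ∈ setMul (Bc g⁻¹) (Bc g), Rv g x = ((v g).Rm !![0, 0; 0, x]) 1 0)
    (hu_compat : ∀ g, ∀ x ∈ setMul ⊤ (Bc g⁻¹), ∀ y ∈ setMul (Bc g⁻¹) ⊤,
      Ru g x * y = x * Lu g y)
    (hv_compat : ∀ g, ∀ x ∈ setMul ⊤ (Bc g), ∀ y ∈ setMul (Bc g) ⊤,
      Rv g x * y = x * Lv g y)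
    (g h : G) :
    -- `w_{g,h} = u_g u_h v_{gh}` is an invertible multiplier of `D_g·D_{gh}`
    -- with inverse `u_{gh} v_h v_g`:
    (let Dgh := setMul (setMul (Bc g) (Bc g⁻¹)) (setMul (Bc (g*h)) (Bc (g*h)⁻¹))
     let wLf : B → B := fun x => Lu g (Lu h (Lv (g*h) x))
     let wRf : B → B := fun x => Rv (g*h) (Ru h (Ru g x))
     let wLi : B → B := fun x => Lu (g*h) (Lv h (Lv g x))
     let wRi : B → B := fun x => Rv g (Rv h (Ru (g*h) x))
     (∀ x ∈ Dgh, wLf x ∈ Dgh ∧ wRf x ∈ Dgh ∧ wLi x ∈ Dgh ∧ wRi x ∈ Dgh) ∧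
     (∀ x y, x ∈ Dgh → y ∈ Dgh →
        wLf (x + y) = wLf x + wLf y ∧ wRf (x + y) = wRf x + wRf y ∧
        wLi (x + y) = wLi x + wLi y ∧ wRi (x + y) = wRi x + wRi y) ∧
     (∀ x y, x ∈ Dgh → y ∈ Dgh →
        wLf (x * y) = wLf x * y ∧ wRf (x * y) = x * wRf y ∧ wRf x * y = x * wLf y) ∧
     (∀ x y, x ∈ Dgh → y ∈ Dgh →
        wLi (x * y) = wLi x * y ∧ wRi (x * y) = x * wRi y ∧ wRi x * y = x * wLi y) ∧
     (∀ x ∈ Dgh, wLi (wLf x) = x ∧ wLf (wLi x) = x ∧ wRi (wRf x) = x ∧ wRf (wRi x) = x)) := by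
  intro Dgh wLf wRf wLi wRi
  set DG : AddSubgroup B := setMul (Bc g) (Bc g⁻¹) with hDGdef
  set DK : AddSubgroup B := setMul (Bc (g*h)) (Bc (g*h)⁻¹) with hDKdef
  set DGH : AddSubgroup B := setMul DG DK with hDGHdef
  have hmulc : ∀ {a b c : G}, a * b = c → ∀ {x y : B}, x ∈ Bc a → y ∈ Bc b → x * y ∈ Bc c := by
    intro a b c hc x y hx hy
    rw [← hc]; exact hgrmul a b x y hx hy
  have grSM : ∀ {a b c : G}, a * b = c → ∀ {x : B}, x ∈ setMul (Bc a) (Bc b) → x ∈ Bc c := by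
    intro a b c hc x hx
    refine setMul_induction hx ?_ (zero_mem _) (fun p q _ _ hp hq => add_mem hp hq)
      (fun p _ hp => neg_mem hp)
    intro p hp q hq
    exact hmulc hc hp hq
  have memL : ∀ (σ : G) {x : B}, x ∈ Bc σ → x ∈ setMul (Bc σ) ⊤ := by
    intro σ x hx
    rw [← hpr σ] at hx
    refine setMul_induction hx ?_ (zero_mem _) (fun p q _ _ hp hq => add_mem hp hq)
      (fun p _ hp => neg_mem hp)
    intro c hc w hw
    refine setMul_induction (p := fun c => c * w ∈ setMul (Bc σ) ⊤) hc ?_ ?_ ?_ ?_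
    · intro p hp q hq
      beta_reduce
      rw [mul_assoc]
      exact mul_mem_setMul hp (AddSubgroup.mem_top _)
    · beta_reduce
      rw [zero_mul]; exact zero_mem _
    · intro p q _ _ hp hq
      beta_reduce
      rw [add_mul]; exact add_mem hp hq
    · intro p _ hp
      beta_reduce
      rw [neg_mul]; exact neg_mem hp
  have memR : ∀ (σ : G) {x : B}, x ∈ Bc σ → x ∈ setMul ⊤ (Bc σ) := by
    intro σ x hx
    rw [← hpr σ] at hx
    refine setMul_induction hx ?_ (zero_mem _) (fun p q _ _ hp hq => add_mem hp hq)
      (fun p _ hp => neg_mem hp)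
    intro c _ w hw
    exact mul_mem_setMul (AddSubgroup.mem_top _) hw
  have tripleInd : ∀ (σ : G) (p : B → Prop), p 0 → (∀ a b, p a → p b → p (a + b)) →
      (∀ a, p a → p (-a)) →
      (∀ u ∈ Bc σ, ∀ v ∈ Bc σ⁻¹, ∀ w ∈ Bc σ, p (u * (v * w))) → ∀ x ∈ Bc σ, p x := by
    intro σ p h0 hadd hneg hgen x hx
    rw [← hpr σ] at hx
    refine setMul_induction hx ?_ h0 (fun a b _ _ => hadd a b) (fun a _ => hneg a)
    intro c hc w hw
    refine setMul_induction (p := fun c => p (c * w)) hc ?_ ?_ ?_ ?_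
    · intro u hu v hv
      beta_reduce
      rw [mul_assoc]
      exact hgen u hu v hv w hw
    · beta_reduce
      rw [zero_mul]; exact h0
    · intro a b _ _ pa pb
      beta_reduce at pa pb ⊢
      rw [add_mul]; exact hadd _ _ pa pb
    · intro a _ pa
      beta_reduce at pa ⊢
      rw [neg_mul]; exact hneg _ pa
  have Lu0 : ∀ σ : G, Lu σ 0 = 0 := fun σ =>
    map_zero_of_add (setMul (Bc σ⁻¹) ⊤) (Lu σ) (fun x hx y hy => hLu_add σ x y hx hy)
  have Lv0 : ∀ σ : G, Lv σ 0 = 0 := fun σ =>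
    map_zero_of_add (setMul (Bc σ) ⊤) (Lv σ) (fun x hx y hy => hLv_add σ x y hx hy)
  have Ru0 : ∀ σ : G, Ru σ 0 = 0 := fun σ =>
    map_zero_of_add (setMul ⊤ (Bc σ⁻¹)) (Ru σ) (fun x hx y hy => hRu_add σ x y hx hy)
  have Rv0 : ∀ σ : G, Rv σ 0 = 0 := fun σ =>
    map_zero_of_add (setMul ⊤ (Bc σ)) (Rv σ) (fun x hx y hy => hRv_add σ x y hx hy)
  have Lune : ∀ (σ : G) {x : B}, x ∈ setMul (Bc σ⁻¹) ⊤ → Lu σ (-x) = - Lu σ x :=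
    fun σ {x} hx => map_neg_of_add _ (Lu σ) (fun x hx y hy => hLu_add σ x y hx hy) hx
  have Lvne : ∀ (σ : G) {x : B}, x ∈ setMul (Bc σ) ⊤ → Lv σ (-x) = - Lv σ x :=
    fun σ {x} hx => map_neg_of_add _ (Lv σ) (fun x hx y hy => hLv_add σ x y hx hy) hx
  have Rune : ∀ (σ : G) {x : B}, x ∈ setMul ⊤ (Bc σ⁻¹) → Ru σ (-x) = - Ru σ x :=
    fun σ {x} hx => map_neg_of_add _ (Ru σ) (fun x hx y hy => hRu_add σ x y hx hy) hx
  have Rvne : ∀ (σ : G) {x : B}, x ∈ setMul ⊤ (Bc σ) → Rv σ (-x) = - Rv σ x :=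
    fun σ {x} hx => map_neg_of_add _ (Rv σ) (fun x hx y hy => hRv_add σ x y hx hy) hx
  have hDGgr : ∀ {x : B}, x ∈ DG → x ∈ Bc 1 :=
    fun hx => grSM (show g * g⁻¹ = 1 by group) hx
  have hDKgr : ∀ {x : B}, x ∈ DK → x ∈ Bc 1 :=
    fun hx => grSM (show (g*h) * (g*h)⁻¹ = 1 by group) hx
  -- the four "inner core" lemmas
  have coreLug : ∀ N ∈ Bc h, ∀ q ∈ Bc (g*h)⁻¹, Lu g (N * q) ∈ DGH := by
    intro N hN q hq
    refine (tripleInd ((g*h)⁻¹)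
      (fun r => N * r ∈ setMul (Bc g⁻¹) ⊤ ∧ Lu g (N * r) ∈ DGH) ?_ ?_ ?_ ?_ q hq).2
    · beta_reduce
      rw [mul_zero]; exact ⟨zero_mem _, by rw [Lu0 g]; exact zero_mem _⟩
    · intro a b pa pb
      beta_reduce at pa pb ⊢
      rw [mul_add]
      exact ⟨add_mem pa.1 pb.1, by rw [hLu_add g _ _ pa.1 pb.1]; exact add_mem pa.2 pb.2⟩
    · intro a pa
      beta_reduce at pa ⊢
      rw [mul_neg]
      exact ⟨neg_mem pa.1, by rw [Lune g pa.1]; exact neg_mem pa.2⟩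
    · intro u' hu' v' hv' w' hw'
      rw [inv_inv] at hv'
      have hNu : N * u' ∈ Bc g⁻¹ := hmulc (show h * (g*h)⁻¹ = g⁻¹ by group) hN hu'
      have e : N * (u' * (v' * w')) = (N * u') * (v' * w') := by simp only [mul_assoc]
      constructor
      · rw [e]; exact mul_mem_setMul hNu (AddSubgroup.mem_top _)
      · rw [e, hLu_lin g (N * u') (v' * w') (memL g⁻¹ hNu)]
        exact mul_mem_setMul (hLu_piece₁ g _ hNu) (mul_mem_setMul hv' hw')
  have coreRv : ∀ s ∈ Bc g, ∀ M ∈ Bc h, Rv (g*h) (s * M) ∈ DGH := by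
    intro s hs M hM
    refine (tripleInd g
      (fun z => z * M ∈ setMul ⊤ (Bc (g*h)) ∧ Rv (g*h) (z * M) ∈ DGH) ?_ ?_ ?_ ?_ s hs).2
    · beta_reduce
      rw [zero_mul]; exact ⟨zero_mem _, by rw [Rv0 (g*h)]; exact zero_mem _⟩
    · intro a b pa pb
      beta_reduce at pa pb ⊢
      rw [add_mul]
      exact ⟨add_mem pa.1 pb.1, by rw [hRv_add (g*h) _ _ pa.1 pb.1]; exact add_mem pa.2 pb.2⟩
    · intro a pa
      beta_reduce at pa ⊢
      rw [neg_mul]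
      exact ⟨neg_mem pa.1, by rw [Rvne (g*h) pa.1]; exact neg_mem pa.2⟩
    · intro σ hσ m hm σ' hσ'
      have hσ'M : σ' * M ∈ Bc (g*h) := hgrmul g h σ' M hσ' hM
      have e : (σ * (m * σ')) * M = (σ * m) * (σ' * M) := by simp only [mul_assoc]
      constructor
      · rw [e]; exact mul_mem_setMul (AddSubgroup.mem_top _) hσ'M
      · rw [e, hRv_lin (g*h) (σ' * M) (σ * m) (memR (g*h) hσ'M)]
        exact mul_mem_setMul (mul_mem_setMul hσ hm) (hRv_piece₁ (g*h) _ hσ'M)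
  have coreRvg : ∀ s ∈ Bc g, ∀ V ∈ setMul (Bc h) (Bc h⁻¹), Rv g (s * V) ∈ DK := by
    intro s hs V hV
    refine (setMul_induction
      (p := fun V => s * V ∈ setMul ⊤ (Bc g) ∧ Rv g (s * V) ∈ DK) hV ?_ ?_ ?_ ?_).2
    · intro δ hδ γ hγ
      beta_reduce
      have hsδ : s * δ ∈ Bc (g*h) := hgrmul g h s δ hs hδ
      rw [show s * (δ * γ) = (s * δ) * γ from (mul_assoc s δ γ).symm]
      refine tripleInd (g*h)
        (fun w => w * γ ∈ setMul ⊤ (Bc g) ∧ Rv g (w * γ) ∈ DK) ?_ ?_ ?_ ?_ (s * δ) hsδ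
      · beta_reduce
        rw [zero_mul]; exact ⟨zero_mem _, by rw [Rv0 g]; exact zero_mem _⟩
      · intro a b pa pb
        beta_reduce at pa pb ⊢
        rw [add_mul]
        exact ⟨add_mem pa.1 pb.1, by rw [hRv_add g _ _ pa.1 pb.1]; exact add_mem pa.2 pb.2⟩
      · intro a pa
        beta_reduce at pa ⊢
        rw [neg_mul]
        exact ⟨neg_mem pa.1, by rw [Rvne g pa.1]; exact neg_mem pa.2⟩
      · intro P1 hP1 Q1 hQ1 P2 hP2
        have hPg : P2 * γ ∈ Bc g := hmulc (show (g*h) * h⁻¹ = g by group) hP2 hγ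
        have e2 : (P1 * (Q1 * P2)) * γ = (P1 * Q1) * (P2 * γ) := by simp only [mul_assoc]
        constructor
        · rw [e2]; exact mul_mem_setMul (AddSubgroup.mem_top _) hPg
        · rw [e2, hRv_lin g (P2 * γ) (P1 * Q1) (memR g hPg), mul_assoc]
          have hRg1 : Rv g (P2 * γ) ∈ Bc 1 :=
            grSM (show g * g⁻¹ = 1 by group) (hRv_piece₁ g _ hPg)
          have hQR : Q1 * Rv g (P2 * γ) ∈ Bc (g*h)⁻¹ :=
            hmulc (show (g*h)⁻¹ * 1 = (g*h)⁻¹ by group) hQ1 hRg1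
          exact mul_mem_setMul hP1 hQR
    · beta_reduce
      rw [mul_zero]; exact ⟨zero_mem _, by rw [Rv0 g]; exact zero_mem _⟩
    · intro a b _ _ pa pb
      beta_reduce at pa pb ⊢
      rw [mul_add]
      exact ⟨add_mem pa.1 pb.1, by rw [hRv_add g _ _ pa.1 pb.1]; exact add_mem pa.2 pb.2⟩
    · intro a _ pa
      beta_reduce at pa ⊢
      rw [mul_neg]
      exact ⟨neg_mem pa.1, by rw [Rvne g pa.1]; exact neg_mem pa.2⟩
  have coreLuK : ∀ V ∈ setMul (Bc h⁻¹) (Bc h), ∀ q ∈ Bc (g*h)⁻¹, Lu (g*h) (V * q) ∈ DG := by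
    intro V hV q hq
    refine (setMul_induction
      (p := fun V => V * q ∈ setMul (Bc (g*h)⁻¹) ⊤ ∧ Lu (g*h) (V * q) ∈ DG) hV ?_ ?_ ?_ ?_).2
    · intro γ hγ δ hδ
      beta_reduce
      have hm : δ * q ∈ Bc g⁻¹ := hmulc (show h * (g*h)⁻¹ = g⁻¹ by group) hδ hq
      rw [show (γ * δ) * q = γ * (δ * q) from mul_assoc γ δ q]
      refine tripleInd g⁻¹
        (fun m => γ * m ∈ setMul (Bc (g*h)⁻¹) ⊤ ∧ Lu (g*h) (γ * m) ∈ DG) ?_ ?_ ?_ ?_ (δ * q) hm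
      · beta_reduce
        rw [mul_zero]; exact ⟨zero_mem _, by rw [Lu0 (g*h)]; exact zero_mem _⟩
      · intro a b pa pb
        beta_reduce at pa pb ⊢
        rw [mul_add]
        exact ⟨add_mem pa.1 pb.1, by rw [hLu_add (g*h) _ _ pa.1 pb.1]; exact add_mem pa.2 pb.2⟩
      · intro a pa
        beta_reduce at pa ⊢
        rw [mul_neg]
        exact ⟨neg_mem pa.1, by rw [Lune (g*h) pa.1]; exact neg_mem pa.2⟩
      · intro m1 hm1 σ hσ m2 hm2
        rw [inv_inv] at hσ
        have hγm : γ * m1 ∈ Bc (g*h)⁻¹ := hmulc (show h⁻¹ * g⁻¹ = (g*h)⁻¹ by group) hγ hm1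
        have e : γ * (m1 * (σ * m2)) = (γ * m1) * (σ * m2) := by simp only [mul_assoc]
        constructor
        · rw [e]; exact mul_mem_setMul hγm (AddSubgroup.mem_top _)
        · rw [e, hLu_lin (g*h) (γ * m1) (σ * m2) (memL ((g*h)⁻¹) hγm), ← mul_assoc]
          have hκ1 : Lu (g*h) (γ * m1) ∈ Bc 1 :=
            grSM (show (g*h) * (g*h)⁻¹ = 1 by group) (hLu_piece₁ (g*h) _ hγm)
          have hκσ : Lu (g*h) (γ * m1) * σ ∈ Bc g := hmulc (one_mul g) hκ1 hσ
          exact mul_mem_setMul hκσ hm2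
    · beta_reduce
      rw [zero_mul]; exact ⟨zero_mem _, by rw [Lu0 (g*h)]; exact zero_mem _⟩
    · intro a b _ _ pa pb
      beta_reduce at pa pb ⊢
      rw [add_mul]
      exact ⟨add_mem pa.1 pb.1, by rw [hLu_add (g*h) _ _ pa.1 pb.1]; exact add_mem pa.2 pb.2⟩
    · intro a _ pa
      beta_reduce at pa ⊢
      rw [neg_mul]
      exact ⟨neg_mem pa.1, by rw [Lune (g*h) pa.1]; exact neg_mem pa.2⟩
  
  -- chain A : wLf
  have hA : ∀ x ∈ DGH, PChain (Lv (g*h)) (Lu h) (Lu g) (setMul (Bc (g*h)) ⊤)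
      (setMul (Bc h⁻¹) ⊤) (Bc (g*h)⁻¹) (Bc g⁻¹) DGH x := by
    have Pz := PChain_zero (Lv (g*h)) (Lu h) (Lu g) (setMul (Bc (g*h)) ⊤)
      (setMul (Bc h⁻¹) ⊤) (setMul (Bc g⁻¹) ⊤) (Bc (g*h)⁻¹) (Bc g⁻¹) DGH
      (fun x hx y hy => hLv_add (g*h) x y hx hy)
      (fun x hx y hy => hLu_add h x y hx hy)
      (fun x hx y hy => hLu_add g x y hx hy)
    have Pa := PChain_add (Lv (g*h)) (Lu h) (Lu g) (setMul (Bc (g*h)) ⊤)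
      (setMul (Bc h⁻¹) ⊤) (setMul (Bc g⁻¹) ⊤) (Bc (g*h)⁻¹) (Bc g⁻¹) DGH
      (fun x hx y hy => hLv_add (g*h) x y hx hy)
      (fun x hx y hy => hLu_add h x y hx hy)
      (fun x hx y hy => hLu_add g x y hx hy)
      (fun {x} hx => memL g⁻¹ hx)
    have Pn := PChain_neg (Lv (g*h)) (Lu h) (Lu g) (setMul (Bc (g*h)) ⊤)
      (setMul (Bc h⁻¹) ⊤) (setMul (Bc g⁻¹) ⊤) (Bc (g*h)⁻¹) (Bc g⁻¹) DGH
      (fun x hx y hy => hLv_add (g*h) x y hx hy)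
      (fun x hx y hy => hLu_add h x y hx hy)
      (fun x hx y hy => hLu_add g x y hx hy)
      (fun {x} hx => memL g⁻¹ hx)
    intro x hx
    refine setMul_induction hx ?_ Pz (fun a b _ _ => Pa a b) (fun a _ => Pn a)
    intro a ha b hb
    refine setMul_induction (p := fun a => PChain (Lv (g*h)) (Lu h) (Lu g)
      (setMul (Bc (g*h)) ⊤) (setMul (Bc h⁻¹) ⊤) (Bc (g*h)⁻¹) (Bc g⁻¹) DGH (a * b))
      ha ?_ ?_ ?_ ?_
    · intro s hs t ht
      beta_reduce
      refine setMul_induction (p := fun b => PChain (Lv (g*h)) (Lu h) (Lu g)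
        (setMul (Bc (g*h)) ⊤) (setMul (Bc h⁻¹) ⊤) (Bc (g*h)⁻¹) (Bc g⁻¹) DGH ((s * t) * b))
        hb ?_ ?_ ?_ ?_
      · intro p hp q hq
        beta_reduce
        rw [show (s * t) * (p * q) = s * ((t * p) * q) from by simp only [mul_assoc]]
        have htp : t * p ∈ Bc h := hmulc (show g⁻¹ * (g*h) = h by group) ht hp
        refine tripleInd h (fun w => PChain (Lv (g*h)) (Lu h) (Lu g)
          (setMul (Bc (g*h)) ⊤) (setMul (Bc h⁻¹) ⊤) (Bc (g*h)⁻¹) (Bc g⁻¹) DGH (s * (w * q)))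
          ?_ ?_ ?_ ?_ (t * p) htp
        · beta_reduce
          rw [zero_mul, mul_zero]; exact Pz
        · intro w1 w2 pw1 pw2
          beta_reduce at pw1 pw2 ⊢
          rw [add_mul, mul_add]; exact Pa _ _ pw1 pw2
        · intro w1 pw1
          beta_reduce at pw1 ⊢
          rw [neg_mul, mul_neg]; exact Pn _ pw1
        · intro uu huu vv hvv ww hww
          beta_reduce
          have hsu : s * uu ∈ Bc (g*h) := hgrmul g h s uu hs huu
          have e1 : s * ((uu * (vv * ww)) * q) = (s * uu) * (vv * (ww * q)) := by
            simp only [mul_assoc]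
          have hwq : ww * q ∈ Bc g⁻¹ := hmulc (show h * (g*h)⁻¹ = g⁻¹ by group) hww hq
          have hvwq : vv * (ww * q) ∈ Bc (g*h)⁻¹ :=
            hmulc (show h⁻¹ * g⁻¹ = (g*h)⁻¹ by group) hvv hwq
          have v1 : Lv (g*h) (s * ((uu * (vv * ww)) * q))
              = Lv (g*h) (s * uu) * (vv * (ww * q)) := by
            rw [e1]; exact hLv_lin (g*h) (s * uu) _ (memL (g*h) hsu)
          have hval1 : Lv (g*h) (s * uu) ∈ Bc 1 :=
            grSM (show (g*h)⁻¹ * (g*h) = 1 by group) (hLv_piece₁ (g*h) _ hsu)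
          have hXv : Lv (g*h) (s * uu) * vv ∈ Bc h⁻¹ := hmulc (one_mul h⁻¹) hval1 hvv
          have v1b : Lv (g*h) (s * ((uu * (vv * ww)) * q))
              = ((Lv (g*h) (s * uu) * vv) * ww) * q := by
            rw [v1]; simp only [mul_assoc]
          have v2 : Lu h (Lv (g*h) (s * ((uu * (vv * ww)) * q)))
              = Lu h ((Lv (g*h) (s * uu) * vv) * ww) * q := by
            rw [v1b]; exact hLu_lin h _ q (mul_mem_setMul hXv (AddSubgroup.mem_top _))
          have hN : Lu h ((Lv (g*h) (s * uu) * vv) * ww) ∈ Bc h :=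
            hLu_piece₂ h _ (mul_mem_setMul hXv hww)
          refine ⟨?_, ?_, ?_, ?_, ?_⟩
          · rw [e1]; exact mul_mem_setMul hsu (AddSubgroup.mem_top _)
          · rw [v1]; exact hmulc (one_mul (g*h)⁻¹) hval1 hvwq
          · rw [v1b, show ((Lv (g*h) (s * uu) * vv) * ww) * q
              = (Lv (g*h) (s * uu) * vv) * (ww * q) from by simp only [mul_assoc]]
            exact mul_mem_setMul hXv (AddSubgroup.mem_top _)
          · rw [v2]; exact hmulc (show h * (g*h)⁻¹ = g⁻¹ by group) hN hq
          · rw [v2]; exact coreLug _ hN q hq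
      · beta_reduce
        rw [mul_zero]; exact Pz
      · intro b1 b2 _ _ p1 p2
        beta_reduce at p1 p2 ⊢
        rw [mul_add]; exact Pa _ _ p1 p2
      · intro b1 _ p1
        beta_reduce at p1 ⊢
        rw [mul_neg]; exact Pn _ p1
    · beta_reduce
      rw [zero_mul]; exact Pz
    · intro a1 a2 _ _ p1 p2
      beta_reduce at p1 p2 ⊢
      rw [add_mul]; exact Pa _ _ p1 p2
    · intro a1 _ p1
      beta_reduce at p1 ⊢
      rw [neg_mul]; exact Pn _ p1
  -- chain B : wRf
  have hB : ∀ x ∈ DGH, PChain (Ru g) (Ru h) (Rv (g*h)) (setMul ⊤ (Bc g⁻¹))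
      (setMul ⊤ (Bc h⁻¹)) (Bc g) (Bc (g*h)) DGH x := by
    have Pz := PChain_zero (Ru g) (Ru h) (Rv (g*h)) (setMul ⊤ (Bc g⁻¹))
      (setMul ⊤ (Bc h⁻¹)) (setMul ⊤ (Bc (g*h))) (Bc g) (Bc (g*h)) DGH
      (fun x hx y hy => hRu_add g x y hx hy)
      (fun x hx y hy => hRu_add h x y hx hy)
      (fun x hx y hy => hRv_add (g*h) x y hx hy)
    have Pa := PChain_add (Ru g) (Ru h) (Rv (g*h)) (setMul ⊤ (Bc g⁻¹))
      (setMul ⊤ (Bc h⁻¹)) (setMul ⊤ (Bc (g*h))) (Bc g) (Bc (g*h)) DGH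
      (fun x hx y hy => hRu_add g x y hx hy)
      (fun x hx y hy => hRu_add h x y hx hy)
      (fun x hx y hy => hRv_add (g*h) x y hx hy)
      (fun {x} hx => memR (g*h) hx)
    have Pn := PChain_neg (Ru g) (Ru h) (Rv (g*h)) (setMul ⊤ (Bc g⁻¹))
      (setMul ⊤ (Bc h⁻¹)) (setMul ⊤ (Bc (g*h))) (Bc g) (Bc (g*h)) DGH
      (fun x hx y hy => hRu_add g x y hx hy)
      (fun x hx y hy => hRu_add h x y hx hy)
      (fun x hx y hy => hRv_add (g*h) x y hx hy)
      (fun {x} hx => memR (g*h) hx)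
    intro x hx
    refine setMul_induction hx ?_ Pz (fun a b _ _ => Pa a b) (fun a _ => Pn a)
    intro a ha b hb
    refine setMul_induction (p := fun a => PChain (Ru g) (Ru h) (Rv (g*h))
      (setMul ⊤ (Bc g⁻¹)) (setMul ⊤ (Bc h⁻¹)) (Bc g) (Bc (g*h)) DGH (a * b))
      ha ?_ ?_ ?_ ?_
    · intro s hs t ht
      beta_reduce
      refine setMul_induction (p := fun b => PChain (Ru g) (Ru h) (Rv (g*h))
        (setMul ⊤ (Bc g⁻¹)) (setMul ⊤ (Bc h⁻¹)) (Bc g) (Bc (g*h)) DGH ((s * t) * b))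
        hb ?_ ?_ ?_ ?_
      · intro p hp q hq
        beta_reduce
        rw [show (s * t) * (p * q) = s * ((t * p) * q) from by simp only [mul_assoc]]
        have htp : t * p ∈ Bc h := hmulc (show g⁻¹ * (g*h) = h by group) ht hp
        refine tripleInd h (fun w => PChain (Ru g) (Ru h) (Rv (g*h))
          (setMul ⊤ (Bc g⁻¹)) (setMul ⊤ (Bc h⁻¹)) (Bc g) (Bc (g*h)) DGH (s * (w * q)))
          ?_ ?_ ?_ ?_ (t * p) htp
        · beta_reduce
          rw [zero_mul, mul_zero]; exact Pz
        · intro w1 w2 pw1 pw2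
          beta_reduce at pw1 pw2 ⊢
          rw [add_mul, mul_add]; exact Pa _ _ pw1 pw2
        · intro w1 pw1
          beta_reduce at pw1 ⊢
          rw [neg_mul, mul_neg]; exact Pn _ pw1
        · intro uu huu vv hvv ww hww
          beta_reduce
          have hwq : ww * q ∈ Bc g⁻¹ := hmulc (show h * (g*h)⁻¹ = g⁻¹ by group) hww hq
          have e1 : s * ((uu * (vv * ww)) * q) = (s * (uu * vv)) * (ww * q) := by
            simp only [mul_assoc]
          have r1 : Ru g (s * ((uu * (vv * ww)) * q))
              = (s * (uu * vv)) * Ru g (ww * q) := by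
            rw [e1]; exact hRu_lin g (ww * q) _ (memR g⁻¹ hwq)
          have hR11 : Ru g (ww * q) ∈ Bc 1 :=
            grSM (show g⁻¹ * g = 1 by group) (hRu_piece₂ g _ hwq)
          have huv1 : uu * vv ∈ Bc 1 := hmulc (show h * h⁻¹ = 1 by group) huu hvv
          have hsuv : s * (uu * vv) ∈ Bc g := hmulc (mul_one g) hs huv1
          have hvR : vv * Ru g (ww * q) ∈ Bc h⁻¹ := hmulc (mul_one h⁻¹) hvv hR11
          have r1b : Ru g (s * ((uu * (vv * ww)) * q))
              = (s * uu) * (vv * Ru g (ww * q)) := by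
            rw [r1]; simp only [mul_assoc]
          have r2 : Ru h (Ru g (s * ((uu * (vv * ww)) * q)))
              = (s * uu) * Ru h (vv * Ru g (ww * q)) := by
            rw [r1b]; exact hRu_lin h _ (s * uu) (memR h⁻¹ hvR)
          have hR21 : Ru h (vv * Ru g (ww * q)) ∈ Bc 1 :=
            grSM (show h⁻¹ * h = 1 by group) (hRu_piece₂ h _ hvR)
          have hsu : s * uu ∈ Bc (g*h) := hgrmul g h s uu hs huu
          have r2b : Ru h (Ru g (s * ((uu * (vv * ww)) * q)))
              = s * (uu * Ru h (vv * Ru g (ww * q))) := by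
            rw [r2]; simp only [mul_assoc]
          have hM : uu * Ru h (vv * Ru g (ww * q)) ∈ Bc h := hmulc (mul_one h) huu hR21
          refine ⟨?_, ?_, ?_, ?_, ?_⟩
          · rw [e1]; exact mul_mem_setMul (AddSubgroup.mem_top _) hwq
          · rw [r1]; exact hmulc (mul_one g) hsuv hR11
          · rw [r1b]; exact mul_mem_setMul (AddSubgroup.mem_top _) hvR
          · rw [r2]; exact hmulc (mul_one (g*h)) hsu hR21
          · rw [r2b]; exact coreRv s hs _ hM
      · beta_reduce
        rw [mul_zero]; exact Pz
      · intro b1 b2 _ _ p1 p2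
        beta_reduce at p1 p2 ⊢
        rw [mul_add]; exact Pa _ _ p1 p2
      · intro b1 _ p1
        beta_reduce at p1 ⊢
        rw [mul_neg]; exact Pn _ p1
    · beta_reduce
      rw [zero_mul]; exact Pz
    · intro a1 a2 _ _ p1 p2
      beta_reduce at p1 p2 ⊢
      rw [add_mul]; exact Pa _ _ p1 p2
    · intro a1 _ p1
      beta_reduce at p1 ⊢
      rw [neg_mul]; exact Pn _ p1
  -- chain C : wRi
  have hC : ∀ x ∈ DGH, PChain (Ru (g*h)) (Rv h) (Rv g) (setMul ⊤ (Bc (g*h)⁻¹))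
      (setMul ⊤ (Bc h)) (Bc (g*h)) (Bc g) DK x := by
    have Pz := PChain_zero (Ru (g*h)) (Rv h) (Rv g) (setMul ⊤ (Bc (g*h)⁻¹))
      (setMul ⊤ (Bc h)) (setMul ⊤ (Bc g)) (Bc (g*h)) (Bc g) DK
      (fun x hx y hy => hRu_add (g*h) x y hx hy)
      (fun x hx y hy => hRv_add h x y hx hy)
      (fun x hx y hy => hRv_add g x y hx hy)
    have Pa := PChain_add (Ru (g*h)) (Rv h) (Rv g) (setMul ⊤ (Bc (g*h)⁻¹))
      (setMul ⊤ (Bc h)) (setMul ⊤ (Bc g)) (Bc (g*h)) (Bc g) DK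
      (fun x hx y hy => hRu_add (g*h) x y hx hy)
      (fun x hx y hy => hRv_add h x y hx hy)
      (fun x hx y hy => hRv_add g x y hx hy)
      (fun {x} hx => memR g hx)
    have Pn := PChain_neg (Ru (g*h)) (Rv h) (Rv g) (setMul ⊤ (Bc (g*h)⁻¹))
      (setMul ⊤ (Bc h)) (setMul ⊤ (Bc g)) (Bc (g*h)) (Bc g) DK
      (fun x hx y hy => hRu_add (g*h) x y hx hy)
      (fun x hx y hy => hRv_add h x y hx hy)
      (fun x hx y hy => hRv_add g x y hx hy)
      (fun {x} hx => memR g hx)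
    intro x hx
    refine setMul_induction hx ?_ Pz (fun a b _ _ => Pa a b) (fun a _ => Pn a)
    intro a ha b hb
    refine setMul_induction (p := fun a => PChain (Ru (g*h)) (Rv h) (Rv g)
      (setMul ⊤ (Bc (g*h)⁻¹)) (setMul ⊤ (Bc h)) (Bc (g*h)) (Bc g) DK (a * b))
      ha ?_ ?_ ?_ ?_
    · intro s hs t ht
      beta_reduce
      refine setMul_induction (p := fun b => PChain (Ru (g*h)) (Rv h) (Rv g)
        (setMul ⊤ (Bc (g*h)⁻¹)) (setMul ⊤ (Bc h)) (Bc (g*h)) (Bc g) DK ((s * t) * b))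
        hb ?_ ?_ ?_ ?_
      · intro p hp q hq
        beta_reduce
        have e0 : (s * t) * (p * q) = (s * (t * p)) * q := by simp only [mul_assoc]
        have htp : t * p ∈ Bc h := hmulc (show g⁻¹ * (g*h) = h by group) ht hp
        have hstp : s * (t * p) ∈ Bc (g*h) := hgrmul g h s (t * p) hs htp
        have c1 : Ru (g*h) ((s * t) * (p * q)) = (s * (t * p)) * Ru (g*h) q := by
          rw [e0]; exact hRu_lin (g*h) q _ (memR ((g*h)⁻¹) hq)
        have hRK1 : Ru (g*h) q ∈ Bc 1 :=
          grSM (show (g*h)⁻¹ * (g*h) = 1 by group) (hRu_piece₂ (g*h) _ hq)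
        have hX : (t * p) * Ru (g*h) q ∈ Bc h := hmulc (mul_one h) htp hRK1
        have c1b : Ru (g*h) ((s * t) * (p * q)) = s * ((t * p) * Ru (g*h) q) := by
          rw [c1]; simp only [mul_assoc]
        have c2 : Rv h (Ru (g*h) ((s * t) * (p * q)))
            = s * Rv h ((t * p) * Ru (g*h) q) := by
          rw [c1b]; exact hRv_lin h _ s (memR h hX)
        have hV1 : Rv h ((t * p) * Ru (g*h) q) ∈ Bc 1 :=
          grSM (show h * h⁻¹ = 1 by group) (hRv_piece₁ h _ hX)
        refine ⟨?_, ?_, ?_, ?_, ?_⟩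
        · rw [show (s * t) * (p * q) = ((s * t) * p) * q from by simp only [mul_assoc]]
          exact mul_mem_setMul (AddSubgroup.mem_top _) hq
        · rw [c1]; exact hmulc (mul_one (g*h)) hstp hRK1
        · rw [c1b]; exact mul_mem_setMul (AddSubgroup.mem_top _) hX
        · rw [c2]; exact hmulc (mul_one g) hs hV1
        · rw [c2]; exact coreRvg s hs _ (hRv_piece₁ h _ hX)
      · beta_reduce
        rw [mul_zero]; exact Pz
      · intro b1 b2 _ _ p1 p2
        beta_reduce at p1 p2 ⊢
        rw [mul_add]; exact Pa _ _ p1 p2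
      · intro b1 _ p1
        beta_reduce at p1 ⊢
        rw [mul_neg]; exact Pn _ p1
    · beta_reduce
      rw [zero_mul]; exact Pz
    · intro a1 a2 _ _ p1 p2
      beta_reduce at p1 p2 ⊢
      rw [add_mul]; exact Pa _ _ p1 p2
    · intro a1 _ p1
      beta_reduce at p1 ⊢
      rw [neg_mul]; exact Pn _ p1
  -- chain D : wLi
  have hD : ∀ x ∈ DGH, PChain (Lv g) (Lv h) (Lu (g*h)) (setMul (Bc g) ⊤)
      (setMul (Bc h) ⊤) (Bc g⁻¹) (Bc (g*h)⁻¹) DG x := by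
    have Pz := PChain_zero (Lv g) (Lv h) (Lu (g*h)) (setMul (Bc g) ⊤)
      (setMul (Bc h) ⊤) (setMul (Bc (g*h)⁻¹) ⊤) (Bc g⁻¹) (Bc (g*h)⁻¹) DG
      (fun x hx y hy => hLv_add g x y hx hy)
      (fun x hx y hy => hLv_add h x y hx hy)
      (fun x hx y hy => hLu_add (g*h) x y hx hy)
    have Pa := PChain_add (Lv g) (Lv h) (Lu (g*h)) (setMul (Bc g) ⊤)
      (setMul (Bc h) ⊤) (setMul (Bc (g*h)⁻¹) ⊤) (Bc g⁻¹) (Bc (g*h)⁻¹) DG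
      (fun x hx y hy => hLv_add g x y hx hy)
      (fun x hx y hy => hLv_add h x y hx hy)
      (fun x hx y hy => hLu_add (g*h) x y hx hy)
      (fun {x} hx => memL ((g*h)⁻¹) hx)
    have Pn := PChain_neg (Lv g) (Lv h) (Lu (g*h)) (setMul (Bc g) ⊤)
      (setMul (Bc h) ⊤) (setMul (Bc (g*h)⁻¹) ⊤) (Bc g⁻¹) (Bc (g*h)⁻¹) DG
      (fun x hx y hy => hLv_add g x y hx hy)
      (fun x hx y hy => hLv_add h x y hx hy)
      (fun x hx y hy => hLu_add (g*h) x y hx hy)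
      (fun {x} hx => memL ((g*h)⁻¹) hx)
    intro x hx
    refine setMul_induction hx ?_ Pz (fun a b _ _ => Pa a b) (fun a _ => Pn a)
    intro a ha b hb
    refine setMul_induction (p := fun a => PChain (Lv g) (Lv h) (Lu (g*h))
      (setMul (Bc g) ⊤) (setMul (Bc h) ⊤) (Bc g⁻¹) (Bc (g*h)⁻¹) DG (a * b))
      ha ?_ ?_ ?_ ?_
    · intro s hs t ht
      beta_reduce
      refine setMul_induction (p := fun b => PChain (Lv g) (Lv h) (Lu (g*h))
        (setMul (Bc g) ⊤) (setMul (Bc h) ⊤) (Bc g⁻¹) (Bc (g*h)⁻¹) DG ((s * t) * b))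
        hb ?_ ?_ ?_ ?_
      · intro p hp q hq
        beta_reduce
        have hstL : s * t ∈ setMul (Bc g) ⊤ := mul_mem_setMul hs (AddSubgroup.mem_top _)
        have d1 : Lv g ((s * t) * (p * q)) = Lv g (s * t) * (p * q) :=
          hLv_lin g (s * t) (p * q) hstL
        have hmu : Lv g (s * t) ∈ Bc g⁻¹ := hLv_piece₂ g _ (mul_mem_setMul hs ht)
        have hpq1 : p * q ∈ Bc 1 := hmulc (show (g*h) * (g*h)⁻¹ = 1 by group) hp hq
        have hmup : Lv g (s * t) * p ∈ Bc h :=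
          hmulc (show g⁻¹ * (g*h) = h by group) hmu hp
        have d1b : Lv g ((s * t) * (p * q)) = (Lv g (s * t) * p) * q := by
          rw [d1]; simp only [mul_assoc]
        have d2 : Lv h (Lv g ((s * t) * (p * q))) = Lv h (Lv g (s * t) * p) * q := by
          rw [d1b]; exact hLv_lin h _ q (memL h hmup)
        have hV' : Lv h (Lv g (s * t) * p) ∈ setMul (Bc h⁻¹) (Bc h) := hLv_piece₁ h _ hmup
        have hV'1 : Lv h (Lv g (s * t) * p) ∈ Bc 1 :=
          grSM (show h⁻¹ * h = 1 by group) hV'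
        refine ⟨?_, ?_, ?_, ?_, ?_⟩
        · rw [show (s * t) * (p * q) = s * (t * (p * q)) from by simp only [mul_assoc]]
          exact mul_mem_setMul hs (AddSubgroup.mem_top _)
        · rw [d1]; exact hmulc (mul_one g⁻¹) hmu hpq1
        · rw [d1b]; exact mul_mem_setMul hmup (AddSubgroup.mem_top _)
        · rw [d2]; exact hmulc (one_mul (g*h)⁻¹) hV'1 hq
        · rw [d2]; exact coreLuK _ hV' q hq
      · beta_reduce
        rw [mul_zero]; exact Pz
      · intro b1 b2 _ _ p1 p2
        beta_reduce at p1 p2 ⊢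
        rw [mul_add]; exact Pa _ _ p1 p2
      · intro b1 _ p1
        beta_reduce at p1 ⊢
        rw [mul_neg]; exact Pn _ p1
    · beta_reduce
      rw [zero_mul]; exact Pz
    · intro a1 a2 _ _ p1 p2
      beta_reduce at p1 p2 ⊢
      rw [add_mul]; exact Pa _ _ p1 p2
    · intro a1 _ p1
      beta_reduce at p1 ⊢
      rw [neg_mul]; exact Pn _ p1
  
  -- products of corner algebras
  have hDKmul : ∀ {x y : B}, x ∈ DK → y ∈ DK → x * y ∈ DK := by
    intro x y hx hy
    refine setMul_induction (p := fun x => x * y ∈ DK) hx ?_ ?_ ?_ ?_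
    · intro p hp q hq
      beta_reduce
      rw [mul_assoc]
      exact mul_mem_setMul hp (hmulc (mul_one (g*h)⁻¹) hq (hDKgr hy))
    · beta_reduce
      rw [zero_mul]; exact zero_mem _
    · intro a b _ _ pa pb
      beta_reduce at pa pb ⊢
      rw [add_mul]; exact add_mem pa pb
    · intro a _ pa
      beta_reduce at pa ⊢
      rw [neg_mul]; exact neg_mem pa
  have hDGmul : ∀ {x y : B}, x ∈ DG → y ∈ DG → x * y ∈ DG := by
    intro x y hx hy
    refine setMul_induction (p := fun y => x * y ∈ DG) hy ?_ ?_ ?_ ?_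
    · intro p hp q hq
      beta_reduce
      rw [← mul_assoc]
      exact mul_mem_setMul (hmulc (one_mul g) (hDGgr hx) hp) hq
    · beta_reduce
      rw [mul_zero]; exact zero_mem _
    · intro a b _ _ pa pb
      beta_reduce at pa pb ⊢
      rw [mul_add]; exact add_mem pa pb
    · intro a _ pa
      beta_reduce at pa ⊢
      rw [mul_neg]; exact neg_mem pa
  have hDGHmulDK : ∀ {x k' : B}, x ∈ DGH → k' ∈ DK → x * k' ∈ DGH := by
    intro x k' hx hk
    refine setMul_induction (p := fun x => x * k' ∈ DGH) hx ?_ ?_ ?_ ?_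
    · intro a ha b hb
      beta_reduce
      rw [mul_assoc]
      exact mul_mem_setMul ha (hDKmul hb hk)
    · beta_reduce
      rw [zero_mul]; exact zero_mem _
    · intro a b _ _ pa pb
      beta_reduce at pa pb ⊢
      rw [add_mul]; exact add_mem pa pb
    · intro a _ pa
      beta_reduce at pa ⊢
      rw [neg_mul]; exact neg_mem pa
  have hDGmulDGH : ∀ {c x : B}, c ∈ DG → x ∈ DGH → c * x ∈ DGH := by
    intro c x hc hx
    refine setMul_induction (p := fun x => c * x ∈ DGH) hx ?_ ?_ ?_ ?_
    · intro a ha b hb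
      beta_reduce
      rw [← mul_assoc]
      exact mul_mem_setMul (hDGmul hc ha) hb
    · beta_reduce
      rw [mul_zero]; exact zero_mem _
    · intro a b _ _ pa pb
      beta_reduce at pa pb ⊢
      rw [mul_add]; exact add_mem pa pb
    · intro a _ pa
      beta_reduce at pa ⊢
      rw [mul_neg]; exact neg_mem pa
  -- Cohen-type factorizations
  have hDKDK : ∀ {x : B}, x ∈ DK → x ∈ setMul DK DK := by
    intro x hx
    refine setMul_induction hx ?_ (zero_mem _) (fun a b _ _ pa pb => add_mem pa pb)
      (fun a _ pa => neg_mem pa)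
    intro p hp q hq
    refine tripleInd (g*h) (fun p => p * q ∈ setMul DK DK) ?_ ?_ ?_ ?_ p hp
    · beta_reduce
      rw [zero_mul]; exact zero_mem _
    · intro a b pa pb
      beta_reduce at pa pb ⊢
      rw [add_mul]; exact add_mem pa pb
    · intro a pa
      beta_reduce at pa ⊢
      rw [neg_mul]; exact neg_mem pa
    · intro P1 hP1 Q1 hQ1 P2 hP2
      beta_reduce
      rw [show (P1 * (Q1 * P2)) * q = (P1 * Q1) * (P2 * q) from by simp only [mul_assoc]]
      exact mul_mem_setMul (mul_mem_setMul hP1 hQ1) (mul_mem_setMul hP2 hq)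
  have hDGDG : ∀ {x : B}, x ∈ DG → x ∈ setMul DG DG := by
    intro x hx
    refine setMul_induction hx ?_ (zero_mem _) (fun a b _ _ pa pb => add_mem pa pb)
      (fun a _ pa => neg_mem pa)
    intro p hp q hq
    refine tripleInd g (fun p => p * q ∈ setMul DG DG) ?_ ?_ ?_ ?_ p hp
    · beta_reduce
      rw [zero_mul]; exact zero_mem _
    · intro a b pa pb
      beta_reduce at pa pb ⊢
      rw [add_mul]; exact add_mem pa pb
    · intro a pa
      beta_reduce at pa ⊢
      rw [neg_mul]; exact neg_mem pa
    · intro P1 hP1 Q1 hQ1 P2 hP2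
      beta_reduce
      rw [show (P1 * (Q1 * P2)) * q = (P1 * Q1) * (P2 * q) from by simp only [mul_assoc]]
      exact mul_mem_setMul (mul_mem_setMul hP1 hQ1) (mul_mem_setMul hP2 hq)
  have hDghR : ∀ {x : B}, x ∈ DGH → x ∈ setMul DGH DK := by
    intro x hx
    refine setMul_induction hx ?_ (zero_mem _) (fun a b _ _ pa pb => add_mem pa pb)
      (fun a _ pa => neg_mem pa)
    intro a ha b hb
    refine setMul_induction (p := fun b => a * b ∈ setMul DGH DK) (hDKDK hb) ?_ ?_ ?_ ?_
    · intro k1 hk1 k2 hk2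
      beta_reduce
      rw [← mul_assoc]
      exact mul_mem_setMul (mul_mem_setMul ha hk1) hk2
    · beta_reduce
      rw [mul_zero]; exact zero_mem _
    · intro c d _ _ pc pd
      beta_reduce at pc pd ⊢
      rw [mul_add]; exact add_mem pc pd
    · intro c _ pc
      beta_reduce at pc ⊢
      rw [mul_neg]; exact neg_mem pc
  have hDghL : ∀ {x : B}, x ∈ DGH → x ∈ setMul DG DGH := by
    intro x hx
    refine setMul_induction hx ?_ (zero_mem _) (fun a b _ _ pa pb => add_mem pa pb)
      (fun a _ pa => neg_mem pa)
    intro a ha b hb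
    refine setMul_induction (p := fun a => a * b ∈ setMul DG DGH) (hDGDG ha) ?_ ?_ ?_ ?_
    · intro c1 hc1 c2 hc2
      beta_reduce
      rw [mul_assoc]
      exact mul_mem_setMul hc1 (mul_mem_setMul hc2 hb)
    · beta_reduce
      rw [zero_mul]; exact zero_mem _
    · intro c d _ _ pc pd
      beta_reduce at pc pd ⊢
      rw [add_mul]; exact add_mem pc pd
    · intro c _ pc
      beta_reduce at pc ⊢
      rw [neg_mul]; exact neg_mem pc
  -- membership of wLi and wRi
  have hD3 : ∀ x ∈ DGH, Lu (g*h) (Lv h (Lv g x)) ∈ DGH := by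
    intro x hx
    refine (setMul_induction
      (p := fun z => z ∈ DGH ∧ Lu (g*h) (Lv h (Lv g z)) ∈ DGH) (hDghR hx) ?_ ?_ ?_ ?_).2
    · intro a ha k' hk
      beta_reduce
      have pa := hD a ha
      have e1 : Lv g (a * k') = Lv g a * k' := hLv_lin g a k' pa.1
      have e2 : Lv h (Lv g a * k') = Lv h (Lv g a) * k' := hLv_lin h _ k' pa.2.2.1
      have e3 : Lu (g*h) (Lv h (Lv g a) * k') = Lu (g*h) (Lv h (Lv g a)) * k' :=
        hLu_lin (g*h) _ k' (memL ((g*h)⁻¹) pa.2.2.2.1)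
      refine ⟨hDGHmulDK ha hk, ?_⟩
      rw [e1, e2, e3]
      exact mul_mem_setMul pa.2.2.2.2 hk
    · beta_reduce
      exact ⟨zero_mem _, by rw [Lv0 g, Lv0 h, Lu0 (g*h)]; exact zero_mem _⟩
    · intro z1 z2 _ _ p1 p2
      beta_reduce at p1 p2 ⊢
      have q1 := hD z1 p1.1
      have q2 := hD z2 p2.1
      refine ⟨add_mem p1.1 p2.1, ?_⟩
      rw [hLv_add g _ _ q1.1 q2.1, hLv_add h _ _ q1.2.2.1 q2.2.2.1,
        hLu_add (g*h) _ _ (memL ((g*h)⁻¹) q1.2.2.2.1) (memL ((g*h)⁻¹) q2.2.2.2.1)]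
      exact add_mem p1.2 p2.2
    · intro z _ p1
      beta_reduce at p1 ⊢
      have q1 := hD z p1.1
      refine ⟨neg_mem p1.1, ?_⟩
      rw [Lvne g q1.1, Lvne h q1.2.2.1, Lune (g*h) (memL ((g*h)⁻¹) q1.2.2.2.1)]
      exact neg_mem p1.2
  have hC3 : ∀ x ∈ DGH, Rv g (Rv h (Ru (g*h) x)) ∈ DGH := by
    intro x hx
    refine (setMul_induction
      (p := fun z => z ∈ DGH ∧ Rv g (Rv h (Ru (g*h) z)) ∈ DGH) (hDghL hx) ?_ ?_ ?_ ?_).2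
    · intro c hc y hy
      beta_reduce
      have py := hC y hy
      have e1 : Ru (g*h) (c * y) = c * Ru (g*h) y := hRu_lin (g*h) y c py.1
      have e2 : Rv h (c * Ru (g*h) y) = c * Rv h (Ru (g*h) y) := hRv_lin h _ c py.2.2.1
      have e3 : Rv g (c * Rv h (Ru (g*h) y)) = c * Rv g (Rv h (Ru (g*h) y)) :=
        hRv_lin g _ c (memR g py.2.2.2.1)
      refine ⟨hDGmulDGH hc hy, ?_⟩
      rw [e1, e2, e3]
      exact mul_mem_setMul hc py.2.2.2.2
    · beta_reduce
      exact ⟨zero_mem _, by rw [Ru0 (g*h), Rv0 h, Rv0 g]; exact zero_mem _⟩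
    · intro z1 z2 _ _ p1 p2
      beta_reduce at p1 p2 ⊢
      have q1 := hC z1 p1.1
      have q2 := hC z2 p2.1
      refine ⟨add_mem p1.1 p2.1, ?_⟩
      rw [hRu_add (g*h) _ _ q1.1 q2.1, hRv_add h _ _ q1.2.2.1 q2.2.2.1,
        hRv_add g _ _ (memR g q1.2.2.2.1) (memR g q2.2.2.2.1)]
      exact add_mem p1.2 p2.2
    · intro z _ p1
      beta_reduce at p1 ⊢
      have q1 := hC z p1.1
      refine ⟨neg_mem p1.1, ?_⟩
      rw [Rune (g*h) q1.1, Rvne h q1.2.2.1, Rvne g (memR g q1.2.2.2.1)]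
      exact neg_mem p1.2
  -- assemble
  refine ⟨?_, ?_, ?_, ?_, ?_⟩
  · intro x hx
    exact ⟨(hA x hx).2.2.2.2, (hB x hx).2.2.2.2, hD3 x hx, hC3 x hx⟩
  · intro x y hx hy
    refine ⟨?_, ?_, ?_, ?_⟩
    · show Lu g (Lu h (Lv (g*h) (x + y)))
        = Lu g (Lu h (Lv (g*h) x)) + Lu g (Lu h (Lv (g*h) y))
      rw [hLv_add (g*h) x y (hA x hx).1 (hA y hy).1,
        hLu_add h _ _ (hA x hx).2.2.1 (hA y hy).2.2.1,
        hLu_add g _ _ (memL g⁻¹ (hA x hx).2.2.2.1) (memL g⁻¹ (hA y hy).2.2.2.1)]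
    · show Rv (g*h) (Ru h (Ru g (x + y)))
        = Rv (g*h) (Ru h (Ru g x)) + Rv (g*h) (Ru h (Ru g y))
      rw [hRu_add g x y (hB x hx).1 (hB y hy).1,
        hRu_add h _ _ (hB x hx).2.2.1 (hB y hy).2.2.1,
        hRv_add (g*h) _ _ (memR (g*h) (hB x hx).2.2.2.1) (memR (g*h) (hB y hy).2.2.2.1)]
    · show Lu (g*h) (Lv h (Lv g (x + y)))
        = Lu (g*h) (Lv h (Lv g x)) + Lu (g*h) (Lv h (Lv g y))
      rw [hLv_add g x y (hD x hx).1 (hD y hy).1,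
        hLv_add h _ _ (hD x hx).2.2.1 (hD y hy).2.2.1,
        hLu_add (g*h) _ _ (memL ((g*h)⁻¹) (hD x hx).2.2.2.1) (memL ((g*h)⁻¹) (hD y hy).2.2.2.1)]
    · show Rv g (Rv h (Ru (g*h) (x + y)))
        = Rv g (Rv h (Ru (g*h) x)) + Rv g (Rv h (Ru (g*h) y))
      rw [hRu_add (g*h) x y (hC x hx).1 (hC y hy).1,
        hRv_add h _ _ (hC x hx).2.2.1 (hC y hy).2.2.1,
        hRv_add g _ _ (memR g (hC x hx).2.2.2.1) (memR g (hC y hy).2.2.2.1)]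
  · intro x y hx hy
    refine ⟨?_, ?_, ?_⟩
    · show Lu g (Lu h (Lv (g*h) (x * y))) = Lu g (Lu h (Lv (g*h) x)) * y
      rw [hLv_lin (g*h) x y (hA x hx).1, hLu_lin h _ y (hA x hx).2.2.1,
        hLu_lin g _ y (memL g⁻¹ (hA x hx).2.2.2.1)]
    · show Rv (g*h) (Ru h (Ru g (x * y))) = x * Rv (g*h) (Ru h (Ru g y))
      rw [hRu_lin g y x (hB y hy).1, hRu_lin h _ x (hB y hy).2.2.1,
        hRv_lin (g*h) _ x (memR (g*h) (hB y hy).2.2.2.1)]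
    · show Rv (g*h) (Ru h (Ru g x)) * y = x * Lu g (Lu h (Lv (g*h) y))
      rw [hv_compat (g*h) _ (memR (g*h) (hB x hx).2.2.2.1) y (hA y hy).1,
        hu_compat h _ (hB x hx).2.2.1 _ (hA y hy).2.2.1,
        hu_compat g x (hB x hx).1 _ (memL g⁻¹ (hA y hy).2.2.2.1)]
  · intro x y hx hy
    refine ⟨?_, ?_, ?_⟩
    · show Lu (g*h) (Lv h (Lv g (x * y))) = Lu (g*h) (Lv h (Lv g x)) * y
      rw [hLv_lin g x y (hD x hx).1, hLv_lin h _ y (hD x hx).2.2.1,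
        hLu_lin (g*h) _ y (memL ((g*h)⁻¹) (hD x hx).2.2.2.1)]
    · show Rv g (Rv h (Ru (g*h) (x * y))) = x * Rv g (Rv h (Ru (g*h) y))
      rw [hRu_lin (g*h) y x (hC y hy).1, hRv_lin h _ x (hC y hy).2.2.1,
        hRv_lin g _ x (memR g (hC y hy).2.2.2.1)]
    · show Rv g (Rv h (Ru (g*h) x)) * y = x * Lu (g*h) (Lv h (Lv g y))
      rw [hv_compat g _ (memR g (hC x hx).2.2.2.1) y (hD y hy).1,
        hv_compat h _ (hC x hx).2.2.1 _ (hD y hy).2.2.1,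
        hu_compat (g*h) x (hC x hx).1 _ (memL ((g*h)⁻¹) (hD y hy).2.2.2.1)]
  · intro x hx
    refine ⟨?_, ?_, ?_, ?_⟩
    · show Lu (g*h) (Lv h (Lv g (Lu g (Lu h (Lv (g*h) x))))) = x
      rw [hLuLv g (Lu h (Lv (g*h) x)) (memL g⁻¹ (hA x hx).2.2.2.1),
        hLuLv h (Lv (g*h) x) (hA x hx).2.2.1,
        hLvLu (g*h) x (hA x hx).1]
    · show Lu g (Lu h (Lv (g*h) (Lu (g*h) (Lv h (Lv g x))))) = x
      rw [hLuLv (g*h) (Lv h (Lv g x)) (memL ((g*h)⁻¹) (hD x hx).2.2.2.1),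
        hLvLu h (Lv g x) (hD x hx).2.2.1,
        hLvLu g x (hD x hx).1]
    · show Rv g (Rv h (Ru (g*h) (Rv (g*h) (Ru h (Ru g x))))) = x
      rw [hRvRu (g*h) (Ru h (Ru g x)) (memR (g*h) (hB x hx).2.2.2.1),
        hRuRv h (Ru g x) (hB x hx).2.2.1,
        hRuRv g x (hB x hx).1]
    · show Rv (g*h) (Ru h (Ru g (Rv g (Rv h (Ru (g*h) x))))) = x
      rw [hRvRu g (Rv h (Ru (g*h) x)) (memR g (hC x hx).2.2.2.1),
        hRvRu h (Ru (g*h) x) (hC x hx).2.2.1,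
        hRuRv (g*h) x (hC x hx).1]
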